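/- Every invariant function f ∈ C_n on gl_n(𝔽_q) is a ℂ-linear combination of functions of the form R^n_{(n_1,…,n_r)}(f_1 ⊠ ⋯ ⊠ f_r), where (n_1,…,n_r) runs over compositions of n and each f_i ∈ C_{n_i} is pre-cuspidal (the case r = 1 giving pre-cuspidal functions themselves). -/

import Mathlib

open Matrix BigOperators

namespace HCPaper

open scoped Classical

/-- `gl F n` : the additive group of `n × n` matrices over `F`. -/
abbrev gl (F : Type) (n : ℕ) := Matrix (Fin n) (Fin n) F

variable {F : Type} [Field F] [Fintype F] [DecidableEq F]

/-- Conjugation (adjoint) action of `GL_n(F)` on `gl_n(F)`. -/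
def conjM {n : ℕ} (g : Matrix.GeneralLinearGroup (Fin n) F) (x : gl F n) : gl F n :=
  (g : Matrix (Fin n) (Fin n) F) * x * ((g⁻¹ : Matrix.GeneralLinearGroup (Fin n) F) : Matrix (Fin n) (Fin n) F)

/-- A function `f : gl_n(F) → ℂ` is invariant if it is constant on `GL_n(F)`-conjugacy orbits. -/
def Invariant (n : ℕ) (f : gl F n → ℂ) : Prop :=
  ∀ (g : Matrix.GeneralLinearGroup (Fin n) F) (x : gl F n), f (conjM g x) = f x

/-- Invariance for functions on `gl_k(F) × gl_l(F)` under `GL_k(F) × GL_l(F)`. -/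
def Invariant₂ (k l : ℕ) (h : gl F k × gl F l → ℂ) : Prop :=
  ∀ (g₁ : Matrix.GeneralLinearGroup (Fin k) F) (g₂ : Matrix.GeneralLinearGroup (Fin l) F)
    (x : gl F k) (y : gl F l), h (conjM g₁ x, conjM g₂ y) = h (x, y)

/-- Transport of matrices along an equality of sizes. -/
def castM {m n : ℕ} (h : m = n) (x : gl F m) : gl F n :=
  Matrix.reindex (finCongr h) (finCongr h) x

/-- Transport of functions along an equality of sizes. -/
def castFun {m n : ℕ} (h : m = n) (f : gl F m → ℂ) : gl F n → ℂ :=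
  fun x => f (castM h.symm x)

/-- The block upper-triangular matrix `[x u; 0 y]`, viewed in `gl_{k+l}(F)`. -/
def but (k l : ℕ) (x : gl F k) (u : Matrix (Fin k) (Fin l) F) (y : gl F l) : gl F (k + l) :=
  Matrix.reindex finSumFinEquiv finSumFinEquiv (Matrix.fromBlocks x u 0 y)

/-- The block lower-triangular matrix `[x 0; v y]`, viewed in `gl_{k+l}(F)`. -/
def blt (k l : ℕ) (x : gl F k) (v : Matrix (Fin l) (Fin k) F) (y : gl F l) : gl F (k + l) :=
  Matrix.reindex finSumFinEquiv finSumFinEquiv (Matrix.fromBlocks x 0 v y)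

/-- View a matrix in `gl_{k+l}(F)` as a `2 × 2`-block matrix. -/
def blk (k l : ℕ) (m : gl F (k + l)) : Matrix (Fin k ⊕ Fin l) (Fin k ⊕ Fin l) F :=
  Matrix.reindex finSumFinEquiv.symm finSumFinEquiv.symm m

/-- Membership in `P_{k,l}` : being block upper triangular with blocks of sizes `k, l`. -/
def IsBUT (k l : ℕ) (m : gl F (k + l)) : Prop := Matrix.toBlocks₂₁ (blk k l m) = 0

/-- The projection `π : P_{k,l} → gl_k(F) × gl_l(F)` deleting the off-diagonal block. -/
def proj (k l : ℕ) (m : gl F (k + l)) : gl F k × gl F l :=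
  (Matrix.toBlocks₁₁ (blk k l m), Matrix.toBlocks₂₂ (blk k l m))

/-- The order of the group `P^×_{k,l}` of invertible block upper-triangular matrices. -/
noncomputable def Pcard (F : Type) [Field F] [Fintype F] [DecidableEq F] (k l : ℕ) : ℕ :=
  Nat.card {g : Matrix.GeneralLinearGroup (Fin (k + l)) F //
    IsBUT k l (g : Matrix (Fin (k + l)) (Fin (k + l)) F)}

/-- Harish-Chandra restriction `*R^{k+l}_{k,l}`; by convention it is the identity
(under the canonical identifications) when `k = 0` or `l = 0`. -/
noncomputable def HCres (k l : ℕ) (f : gl F (k + l) → ℂ) : gl F k × gl F l → ℂ :=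
  if hk : k = 0 then fun p => f (castM (by omega) p.2)
  else if hl : l = 0 then fun p => f (castM (by omega) p.1)
  else fun p =>
    ((Fintype.card F : ℂ) ^ (k * l))⁻¹ * ∑ u : Matrix (Fin k) (Fin l) F, f (but k l p.1 u p.2)

/-- Harish-Chandra induction `R^{k+l}_{k,l}`; by convention it is the identity
(under the canonical identifications) when `k = 0` or `l = 0`. -/
noncomputable def HCind (k l : ℕ) (h : gl F k × gl F l → ℂ) : gl F (k + l) → ℂ :=
  if hk : k = 0 then fun z => h (0, castM (by omega) z)
  else if hl : l = 0 then fun z => h (castM (by omega) z, 0)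
  else fun z =>
    ((Pcard F k l : ℂ))⁻¹ *
      ∑ g : Matrix.GeneralLinearGroup (Fin (k + l)) F,
        if IsBUT k l (conjM g z) then h (proj k l (conjM g z)) else 0

/-- The hermitian inner product on `C_n`. -/
noncomputable def inn (n : ℕ) (f g : gl F n → ℂ) : ℂ :=
  ((Fintype.card (Matrix.GeneralLinearGroup (Fin n) F) : ℂ))⁻¹ *
    ∑ x : gl F n, f x * (starRingEnd ℂ) (g x)

/-- The hermitian inner product on invariant functions on `gl_k(F) × gl_l(F)`. -/
noncomputable def inn₂ (k l : ℕ) (f g : gl F k × gl F l → ℂ) : ℂ :=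
  ((Fintype.card (Matrix.GeneralLinearGroup (Fin k) F) *
      Fintype.card (Matrix.GeneralLinearGroup (Fin l) F) : ℂ))⁻¹ *
    ∑ p : gl F k × gl F l, f p * (starRingEnd ℂ) (g p)

/-- `f ∈ C_n` is pre-cuspidal if all proper Harish-Chandra restrictions of `f` vanish. -/
def PreCuspidal (n : ℕ) (f : gl F n → ℂ) : Prop :=
  ∀ (k l : ℕ), 1 ≤ k → 1 ≤ l → ∀ hkl : k + l = n, HCres k l (castFun hkl.symm f) = 0

/-- The composite `R_{(n_1,…,n_r)} ∘ *R_{(n_1,…,n_r)}` of the iterated two-block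
Harish-Chandra induction and restriction along the composition `(n_1,…,n_r)`. -/
noncomputable def RcompRes : (L : List ℕ) → (gl F L.sum → ℂ) → gl F L.sum → ℂ
  | [], f => f
  | (k :: L), f =>
      castFun (List.sum_cons).symm
        (HCind k L.sum fun p =>
          RcompRes L (fun y => HCres k L.sum (castFun List.sum_cons f) (p.1, y)) p.2)

/-- The duality operation `𝒟_n(f) = Σ_{(n_1,…,n_r) ⊨ n} (-1)^{n-r}
R_{(n_1,…,n_r)}(*R_{(n_1,…,n_r)} f)`, the sum over all compositions of `n`. -/
noncomputable def Dual (n : ℕ) (f : gl F n → ℂ) : gl F n → ℂ :=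
  ∑ c : Composition n,
    ((-1 : ℂ)) ^ (n - c.length) •
      castFun c.blocks_sum (RcompRes c.blocks (castFun c.blocks_sum.symm f))

/-- `C_n`, the subspace of invariant functions, as a `ℂ`-submodule of all functions. -/
noncomputable def InvSub (F : Type) [Field F] (n : ℕ) : Submodule ℂ (gl F n → ℂ) where
  carrier := {f | Invariant n f}
  add_mem' := by
    intro a b ha hb g x
    simp only [Pi.add_apply]
    rw [ha g x, hb g x]
  zero_mem' := by intro g x; rfl
  smul_mem' := by
    intro c f hf g x
    simp only [Pi.smul_apply]
    rw [hf g x]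

/-- `χ` is the character of a finite-dimensional complex representation of the
additive group `gl_n(F)`. -/
def IsChar (n : ℕ) (χ : gl F n → ℂ) : Prop :=
  ∃ V : FDRep ℂ (Multiplicative (gl F n)),
    ∀ x : gl F n, FDRep.character V (Multiplicative.ofAdd x) = χ x

/-- An invariant character of `gl_n(F)`. -/
def IsInvChar (n : ℕ) (χ : gl F n → ℂ) : Prop := IsChar n χ ∧ Invariant n χ

/-- A character of the additive group `gl_k(F) × gl_l(F)`. -/
def IsChar₂ (k l : ℕ) (χ : gl F k × gl F l → ℂ) : Prop :=
  ∃ V : FDRep ℂ (Multiplicative (gl F k × gl F l)),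
    ∀ p : gl F k × gl F l, FDRep.character V (Multiplicative.ofAdd p) = χ p

/-- An invariant character of `gl_k(F) × gl_l(F)`. -/
def IsInvChar₂ (k l : ℕ) (χ : gl F k × gl F l → ℂ) : Prop := IsChar₂ k l χ ∧ Invariant₂ k l χ

/-- An irreducible invariant character: a nonzero invariant character which is not
the sum of two nonzero invariant characters. -/
def IrrInvChar (n : ℕ) (χ : gl F n → ℂ) : Prop :=
  IsInvChar n χ ∧ χ ≠ 0 ∧
    ¬ ∃ χ₁ χ₂ : gl F n → ℂ, IsInvChar n χ₁ ∧ IsInvChar n χ₂ ∧ χ₁ ≠ 0 ∧ χ₂ ≠ 0 ∧ χ = χ₁ + χ₂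


/-- Functions of the form `R^n_{(n_1,…,n_r)}(f_1 ⊠ ⋯ ⊠ f_r)` with all `f_i` pre-cuspidal
invariant functions (and `(n_1,…,n_r)` a composition of `n`); `unit` is the empty
composition of `0`, and `cusp` the case `r = 1`. -/
inductive IsIndPreCusp {F : Type} [Field F] [Fintype F] [DecidableEq F] :
    (n : ℕ) → (gl F n → ℂ) → Prop
  | unit : IsIndPreCusp 0 (fun _ => 1)
  | cusp (n : ℕ) (hn : 1 ≤ n) (f : gl F n → ℂ) (hf : Invariant n f)
      (hc : PreCuspidal n f) : IsIndPreCusp n f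
  | step (k m : ℕ) (hk : 1 ≤ k) (hm : 1 ≤ m) (f : gl F k → ℂ) (hf : Invariant k f)
      (hc : PreCuspidal k f) (g : gl F m → ℂ) (hg : IsIndPreCusp m g) :
      IsIndPreCusp (k + m) (HCind k m fun p => f p.1 * g p.2)

set_option linter.unusedSectionVars false
set_option linter.unnecessarySeqFocus false
set_option linter.unusedTactic false
set_option maxHeartbeats 1000000

section Basic

variable {F : Type} [Field F] [Fintype F] [DecidableEq F]

lemma conjM_conjM {n : ℕ} (g h : GL (Fin n) F) (x : gl F n) :
    conjM g (conjM h x) = conjM (g * h) x := by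
  simp only [conjM, _root_.mul_inv_rev, Units.val_mul, mul_assoc]

lemma conjM_one {n : ℕ} (x : gl F n) : conjM (1 : GL (Fin n) F) x = x := by
  simp [conjM]

/-- Conjugation as an equivalence. -/
def conjEquiv {n : ℕ} (g : GL (Fin n) F) : gl F n ≃ gl F n where
  toFun := conjM g
  invFun := conjM g⁻¹
  left_inv x := by rw [conjM_conjM, inv_mul_cancel, conjM_one]
  right_inv x := by rw [conjM_conjM, mul_inv_cancel, conjM_one]

lemma castM_self {n : ℕ} (h : n = n) (x : gl F n) : castM h x = x := by
  ext i j
  simp [castM, Matrix.reindex_apply, Fin.ext_iff]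

lemma castFun_self {n : ℕ} (h : n = n) (f : gl F n → ℂ) : castFun h f = f := by
  funext x; simp [castFun, castM_self]

lemma castM_apply {m n : ℕ} (h : m = n) (x : gl F m) (i j : Fin n) :
    castM h x i j = x (Fin.cast h.symm i) (Fin.cast h.symm j) := rfl

lemma but_mul_but {k l : ℕ} (x x' : gl F k) (u u' : Matrix (Fin k) (Fin l) F)
    (y y' : gl F l) :
    but k l x u y * but k l x' u' y' = but k l (x * x') (x * u' + u * y') (y * y') := by
  simp only [but, Matrix.reindex_apply, Matrix.submatrix_mul_equiv,
    Matrix.fromBlocks_multiply]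
  congr 1 <;> simp

lemma but_one {k l : ℕ} : but k l (1 : gl F k) 0 (1 : gl F l) = 1 := by
  simp only [but, Matrix.fromBlocks_one]
  simp [Matrix.reindex_apply, Matrix.submatrix_one_equiv]

end Basic
section Entries

variable {F : Type} [Field F] [Fintype F] [DecidableEq F]

lemma finSumFinEquiv_symm_eq {k l : ℕ} (i : Fin (k + l)) :
    finSumFinEquiv.symm i = if h : (i : ℕ) < k then Sum.inl ⟨i, h⟩
      else Sum.inr ⟨(i : ℕ) - k, by omega⟩ := by
  split
  · rename_i h
    have : i = Fin.castAdd l ⟨(i : ℕ), h⟩ := by ext; rfl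
    conv_lhs => rw [this]
    exact finSumFinEquiv_symm_apply_castAdd _
  · rename_i h
    have : i = Fin.natAdd k ⟨(i : ℕ) - k, by omega⟩ := by ext; simp; omega
    conv_lhs => rw [this]
    exact finSumFinEquiv_symm_apply_natAdd _

lemma but_apply {k l : ℕ} (x : gl F k) (u : Matrix (Fin k) (Fin l) F) (y : gl F l)
    (i j : Fin (k + l)) :
    but k l x u y i j =
      if hi : (i : ℕ) < k then
        (if hj : (j : ℕ) < k then x ⟨i, hi⟩ ⟨j, hj⟩ else u ⟨i, hi⟩ ⟨(j : ℕ) - k, by omega⟩)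
      else
        (if hj : (j : ℕ) < k then 0 else y ⟨(i : ℕ) - k, by omega⟩ ⟨(j : ℕ) - k, by omega⟩) := by
  simp only [but, Matrix.reindex_apply, Matrix.submatrix_apply, finSumFinEquiv_symm_eq]
  split <;> split <;> rfl

end Entries
section Split

variable {F : Type} [Field F] [Fintype F] [DecidableEq F]

/-- Splitting a matrix with `p + q` rows into two row blocks. -/
def rowEquiv (p q m : ℕ) : Matrix (Fin (p + q)) (Fin m) F ≃
    Matrix (Fin p) (Fin m) F × Matrix (Fin q) (Fin m) F where
  toFun u := (fun i j => u ⟨(i : ℕ), by omega⟩ j, fun i j => u ⟨p + (i : ℕ), by omega⟩ j)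
  invFun t i j := if h : (i : ℕ) < p then t.1 ⟨i, h⟩ j else t.2 ⟨(i : ℕ) - p, by omega⟩ j
  left_inv u := by
    funext i j
    dsimp only
    split <;> congr 1 <;> ext <;> simp <;> omega
  right_inv t := by
    ext i j <;> simp <;> intro h <;> omega

lemma rowEquiv_symm_apply (p q m : ℕ) (a : Matrix (Fin p) (Fin m) F)
    (b : Matrix (Fin q) (Fin m) F) (i : Fin (p + q)) (j : Fin m) :
    (rowEquiv p q m).symm (a, b) i j =
      if h : (i : ℕ) < p then a ⟨i, h⟩ j else b ⟨(i : ℕ) - p, by omega⟩ j := rfl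

/-- Splitting a matrix with `q + m` columns into two column blocks. -/
def colEquiv (p q m : ℕ) : Matrix (Fin p) (Fin (q + m)) F ≃
    Matrix (Fin p) (Fin q) F × Matrix (Fin p) (Fin m) F where
  toFun u := (fun i j => u i ⟨(j : ℕ), by omega⟩, fun i j => u i ⟨q + (j : ℕ), by omega⟩)
  invFun t i j := if h : (j : ℕ) < q then t.1 i ⟨j, h⟩ else t.2 i ⟨(j : ℕ) - q, by omega⟩
  left_inv u := by
    funext i j
    dsimp only
    split <;> congr 1 <;> ext <;> simp <;> omega
  right_inv t := by
    ext i j <;> simp <;> intro h <;> omega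

lemma colEquiv_symm_apply (p q m : ℕ) (a : Matrix (Fin p) (Fin q) F)
    (b : Matrix (Fin p) (Fin m) F) (i : Fin p) (j : Fin (q + m)) :
    (colEquiv p q m).symm (a, b) i j =
      if h : (j : ℕ) < q then a i ⟨j, h⟩ else b i ⟨(j : ℕ) - q, by omega⟩ := rfl

/-- The equivalence between `gl_{k+l}` and quadruples of blocks. -/
def blockEquiv (k l : ℕ) : gl F (k + l) ≃
    gl F k × Matrix (Fin k) (Fin l) F × Matrix (Fin l) (Fin k) F × gl F l where
  toFun m := ((blk k l m).toBlocks₁₁, (blk k l m).toBlocks₁₂,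
    (blk k l m).toBlocks₂₁, (blk k l m).toBlocks₂₂)
  invFun t := Matrix.reindex finSumFinEquiv finSumFinEquiv
    (Matrix.fromBlocks t.1 t.2.1 t.2.2.1 t.2.2.2)
  left_inv m := by
    simp only [Matrix.fromBlocks_toBlocks, blk]
    simp
  right_inv t := by
    simp only [blk, Matrix.reindex_apply, Matrix.submatrix_submatrix]
    simp [Matrix.toBlocks_fromBlocks₁₁, Matrix.toBlocks_fromBlocks₁₂,
      Matrix.toBlocks_fromBlocks₂₁, Matrix.toBlocks_fromBlocks₂₂]

lemma blk_blockEquiv_symm {k l : ℕ} (t : gl F k × Matrix (Fin k) (Fin l) F ×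
    Matrix (Fin l) (Fin k) F × gl F l) :
    blk k l ((blockEquiv k l).symm t) = Matrix.fromBlocks t.1 t.2.1 t.2.2.1 t.2.2.2 := by
  simp only [blockEquiv, Equiv.coe_fn_symm_mk, blk, Matrix.reindex_apply,
    Matrix.submatrix_submatrix]
  simp

lemma blockEquiv_symm_eq_but {k l : ℕ} (x : gl F k) (u : Matrix (Fin k) (Fin l) F)
    (y : gl F l) : (blockEquiv k l).symm (x, u, 0, y) = but k l x u y := rfl

lemma isBUT_blockEquiv_symm {k l : ℕ} (t : gl F k × Matrix (Fin k) (Fin l) F ×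
    Matrix (Fin l) (Fin k) F × gl F l) :
    IsBUT k l ((blockEquiv k l).symm t) ↔ t.2.2.1 = 0 := by
  rw [IsBUT, blk_blockEquiv_symm, Matrix.toBlocks_fromBlocks₂₁]

lemma proj_blockEquiv_symm {k l : ℕ} (t : gl F k × Matrix (Fin k) (Fin l) F ×
    Matrix (Fin l) (Fin k) F × gl F l) :
    proj k l ((blockEquiv k l).symm t) = (t.1, t.2.2.2) := by
  rw [proj, blk_blockEquiv_symm, Matrix.toBlocks_fromBlocks₁₁, Matrix.toBlocks_fromBlocks₂₂]

end Split
set_option linter.unnecessarySimpa false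
set_option linter.unreachableTactic false

section Stages

variable {F : Type} [Field F] [Fintype F] [DecidableEq F]

lemma stages_matrix (k1 k2 m : ℕ) (x1 : gl F k1) (x2 : gl F k2) (y : gl F m)
    (v : Matrix (Fin k1) (Fin k2) F) (b : Matrix (Fin k1) (Fin m) F)
    (c : Matrix (Fin k2) (Fin m) F) :
    but (k1 + k2) m (but k1 k2 x1 v x2) ((rowEquiv k1 k2 m).symm (b, c)) y =
      castM (by omega : k1 + (k2 + m) = k1 + k2 + m)
        (but k1 (k2 + m) x1 ((colEquiv k1 k2 m).symm (v, b)) (but k2 m x2 c y)) := by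
  ext i j
  rw [castM_apply]
  simp only [but_apply, rowEquiv_symm_apply, colEquiv_symm_apply, Fin.coe_cast]
  split_ifs <;>
    first
      | rfl
      | omega
      | (congr 1 <;> ext <;> simp <;> omega)

end Stages

section Stages2

variable {F : Type} [Field F] [Fintype F] [DecidableEq F]

lemma qpow_ne_zero (e : ℕ) : ((Fintype.card F : ℂ)) ^ e ≠ 0 := by
  apply pow_ne_zero
  simp [Fintype.card_ne_zero]

lemma HCres_apply {k l : ℕ} (hk : k ≠ 0) (hl : l ≠ 0) (f : gl F (k + l) → ℂ)
    (p : gl F k × gl F l) :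
    HCres k l f p =
      ((Fintype.card F : ℂ) ^ (k * l))⁻¹ * ∑ u : Matrix (Fin k) (Fin l) F,
        f (but k l p.1 u p.2) := by
  rw [HCres, dif_neg hk, dif_neg hl]

lemma stages (k1 k2 m : ℕ) (hk1 : k1 ≠ 0) (hk2 : k2 ≠ 0) (hm : m ≠ 0)
    (f : gl F (k1 + k2 + m) → ℂ)
    (hv : HCres k1 (k2 + m) (castFun (by omega : k1 + k2 + m = k1 + (k2 + m)) f) = 0)
    (y : gl F m) :
    HCres k1 k2 (fun x => HCres (k1 + k2) m f (x, y)) = 0 := by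
  funext p
  obtain ⟨x1, x2⟩ := p
  -- consequence of hv
  have key : ∀ (z : gl F (k2 + m)),
      ∑ w : Matrix (Fin k1) (Fin (k2 + m)) F,
        f (castM (by omega : k1 + (k2 + m) = k1 + k2 + m) (but k1 (k2 + m) x1 w z)) = 0 := by
    intro z
    have h0 := congrFun hv (x1, z)
    rw [HCres_apply hk1 (by omega)] at h0
    have h1 : ∀ w : Matrix (Fin k1) (Fin (k2 + m)) F,
        castFun (by omega : k1 + k2 + m = k1 + (k2 + m)) f (but k1 (k2 + m) x1 w z) =
          f (castM (by omega : k1 + (k2 + m) = k1 + k2 + m) (but k1 (k2 + m) x1 w z)) := by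
      intro w; rfl
    simp only [h1] at h0
    rcases mul_eq_zero.mp h0 with h | h
    · exact absurd h (by simpa using qpow_ne_zero (F := F) (k1 * (k2 + m)))
    · exact h
  rw [HCres_apply hk1 hk2]
  simp only [HCres_apply (by omega : k1 + k2 ≠ 0) hm]
  rw [← Finset.mul_sum]
  have main : (∑ v : Matrix (Fin k1) (Fin k2) F,
      ∑ u : Matrix (Fin (k1 + k2)) (Fin m) F,
        f (but (k1 + k2) m (but k1 k2 x1 v x2) u y)) = 0 := by
    have step1 : ∀ v : Matrix (Fin k1) (Fin k2) F,
        (∑ u : Matrix (Fin (k1 + k2)) (Fin m) F,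
          f (but (k1 + k2) m (but k1 k2 x1 v x2) u y)) =
        ∑ t : Matrix (Fin k1) (Fin m) F × Matrix (Fin k2) (Fin m) F,
          f (castM (by omega : k1 + (k2 + m) = k1 + k2 + m)
            (but k1 (k2 + m) x1 ((colEquiv k1 k2 m).symm (v, t.1)) (but k2 m x2 t.2 y))) := by
      intro v
      rw [← Equiv.sum_comp (rowEquiv k1 k2 m).symm
        (fun u => f (but (k1 + k2) m (but k1 k2 x1 v x2) u y))]
      refine Finset.sum_congr rfl fun t _ => ?_
      obtain ⟨b, c⟩ := t
      rw [stages_matrix]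
    simp only [step1, Fintype.sum_prod_type]
    rw [Finset.sum_comm]
    -- now : ∑ b, ∑ v, ∑ c, ... ; want ∑ c (∑ (v,b)) ; swap inner
    have : ∀ b : Matrix (Fin k1) (Fin m) F,
        (∑ v : Matrix (Fin k1) (Fin k2) F, ∑ c : Matrix (Fin k2) (Fin m) F,
          f (castM (by omega : k1 + (k2 + m) = k1 + k2 + m)
            (but k1 (k2 + m) x1 ((colEquiv k1 k2 m).symm (v, b)) (but k2 m x2 c y)))) =
        ∑ c : Matrix (Fin k2) (Fin m) F, ∑ v : Matrix (Fin k1) (Fin k2) F,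
          f (castM (by omega : k1 + (k2 + m) = k1 + k2 + m)
            (but k1 (k2 + m) x1 ((colEquiv k1 k2 m).symm (v, b)) (but k2 m x2 c y))) :=
      fun b => Finset.sum_comm
    simp only [this]
    rw [Finset.sum_comm]
    refine Finset.sum_eq_zero fun c _ => ?_
    rw [Finset.sum_comm]
    have := key (but k2 m x2 c y)
    rw [← Equiv.sum_comp (colEquiv k1 k2 m).symm
      (fun w => f (castM (by omega : k1 + (k2 + m) = k1 + k2 + m)
        (but k1 (k2 + m) x1 w (but k2 m x2 c y)))) , Fintype.sum_prod_type] at this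
    exact this
  rw [main, mul_zero]; simp

end Stages2
section Invariance

variable {F : Type} [Field F] [Fintype F] [DecidableEq F]

lemma HCind_apply {k l : ℕ} (hk : k ≠ 0) (hl : l ≠ 0) (h : gl F k × gl F l → ℂ)
    (z : gl F (k + l)) :
    HCind k l h z = ((Pcard F k l : ℂ))⁻¹ *
      ∑ g : Matrix.GeneralLinearGroup (Fin (k + l)) F,
        if IsBUT k l (conjM g z) then h (proj k l (conjM g z)) else 0 := by
  rw [HCind, dif_neg hk, dif_neg hl]

/-- Block-diagonal invertible matrix. -/
def dgl {k l : ℕ} (g₁ : GL (Fin k) F) (g₂ : GL (Fin l) F) : GL (Fin (k + l)) F where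
  val := but k l (g₁ : Matrix (Fin k) (Fin k) F) 0 (g₂ : Matrix (Fin l) (Fin l) F)
  inv := but k l ((g₁⁻¹ : GL (Fin k) F) : Matrix (Fin k) (Fin k) F) 0
    ((g₂⁻¹ : GL (Fin l) F) : Matrix (Fin l) (Fin l) F)
  val_inv := by
    rw [but_mul_but]
    rw [show ((g₁ : Matrix (Fin k) (Fin k) F) * ((g₁⁻¹ : GL (Fin k) F) : Matrix (Fin k) (Fin k) F)) = 1 by
      rw [← Units.val_mul, mul_inv_cancel, Units.val_one]]
    rw [show ((g₂ : Matrix (Fin l) (Fin l) F) * ((g₂⁻¹ : GL (Fin l) F) : Matrix (Fin l) (Fin l) F)) = 1 by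
      rw [← Units.val_mul, mul_inv_cancel, Units.val_one]]
    rw [show ((g₁ : Matrix (Fin k) (Fin k) F) * (0 : Matrix (Fin k) (Fin l) F) +
        (0 : Matrix (Fin k) (Fin l) F) * ((g₂⁻¹ : GL (Fin l) F) : Matrix (Fin l) (Fin l) F)) = 0 by
      simp]
    exact but_one
  inv_val := by
    rw [but_mul_but]
    rw [show (((g₁⁻¹ : GL (Fin k) F) : Matrix (Fin k) (Fin k) F) * (g₁ : Matrix (Fin k) (Fin k) F)) = 1 by
      rw [← Units.val_mul, inv_mul_cancel, Units.val_one]]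
    rw [show (((g₂⁻¹ : GL (Fin l) F) : Matrix (Fin l) (Fin l) F) * (g₂ : Matrix (Fin l) (Fin l) F)) = 1 by
      rw [← Units.val_mul, inv_mul_cancel, Units.val_one]]
    rw [show (((g₁⁻¹ : GL (Fin k) F) : Matrix (Fin k) (Fin k) F) * (0 : Matrix (Fin k) (Fin l) F) +
        (0 : Matrix (Fin k) (Fin l) F) * (g₂ : Matrix (Fin l) (Fin l) F)) = 0 by
      simp]
    exact but_one

lemma dgl_inv_val {k l : ℕ} (g₁ : GL (Fin k) F) (g₂ : GL (Fin l) F) :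
    (((dgl g₁ g₂)⁻¹ : GL (Fin (k + l)) F) : Matrix (Fin (k + l)) (Fin (k + l)) F) =
      but k l ((g₁⁻¹ : GL (Fin k) F) : Matrix (Fin k) (Fin k) F) 0
        ((g₂⁻¹ : GL (Fin l) F) : Matrix (Fin l) (Fin l) F) := rfl

lemma conjM_dgl_but {k l : ℕ} (g₁ : GL (Fin k) F) (g₂ : GL (Fin l) F)
    (x : gl F k) (u : Matrix (Fin k) (Fin l) F) (y : gl F l) :
    conjM (dgl g₁ g₂) (but k l x u y) =
      but k l (conjM g₁ x) ((g₁ : Matrix (Fin k) (Fin k) F) * u *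
        ((g₂⁻¹ : GL (Fin l) F) : Matrix (Fin l) (Fin l) F)) (conjM g₂ y) := by
  rw [conjM, dgl_inv_val]
  rw [show ((dgl g₁ g₂ : GL (Fin (k+l)) F) : Matrix (Fin (k+l)) (Fin (k+l)) F) =
    but k l (g₁ : Matrix (Fin k) (Fin k) F) 0 (g₂ : Matrix (Fin l) (Fin l) F) from rfl]
  rw [but_mul_but, but_mul_but, conjM, conjM]
  congr 1
  simp [Matrix.mul_assoc]

/-- Conjugating the matrix entries of a rectangular matrix. -/
def rectConj {k l : ℕ} (g₁ : GL (Fin k) F) (g₂ : GL (Fin l) F) :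
    Matrix (Fin k) (Fin l) F ≃ Matrix (Fin k) (Fin l) F where
  toFun u := (g₁ : Matrix (Fin k) (Fin k) F) * u * ((g₂⁻¹ : GL (Fin l) F) : Matrix (Fin l) (Fin l) F)
  invFun u := ((g₁⁻¹ : GL (Fin k) F) : Matrix (Fin k) (Fin k) F) * u * (g₂ : Matrix (Fin l) (Fin l) F)
  left_inv u := by
    simp only [← Matrix.mul_assoc]
    rw [show (((g₁⁻¹ : GL (Fin k) F) : Matrix (Fin k) (Fin k) F) * (g₁ : Matrix (Fin k) (Fin k) F)) = 1 by
      rw [← Units.val_mul, inv_mul_cancel, Units.val_one]]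
    rw [Matrix.one_mul, Matrix.mul_assoc]
    rw [show (((g₂⁻¹ : GL (Fin l) F) : Matrix (Fin l) (Fin l) F) * (g₂ : Matrix (Fin l) (Fin l) F)) = 1 by
      rw [← Units.val_mul, inv_mul_cancel, Units.val_one]]
    rw [Matrix.mul_one]
  right_inv u := by
    simp only [← Matrix.mul_assoc]
    rw [show ((g₁ : Matrix (Fin k) (Fin k) F) * ((g₁⁻¹ : GL (Fin k) F) : Matrix (Fin k) (Fin k) F)) = 1 by
      rw [← Units.val_mul, mul_inv_cancel, Units.val_one]]
    rw [Matrix.one_mul, Matrix.mul_assoc]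
    rw [show ((g₂ : Matrix (Fin l) (Fin l) F) * ((g₂⁻¹ : GL (Fin l) F) : Matrix (Fin l) (Fin l) F)) = 1 by
      rw [← Units.val_mul, mul_inv_cancel, Units.val_one]]
    rw [Matrix.mul_one]

lemma hcind_invariant {k l : ℕ} (hk : k ≠ 0) (hl : l ≠ 0) (h : gl F k × gl F l → ℂ) :
    Invariant (k + l) (HCind k l h) := by
  intro g₀ z
  rw [HCind_apply hk hl, HCind_apply hk hl]
  congr 1
  refine Fintype.sum_equiv (Equiv.mulRight g₀)
    (fun g => if IsBUT k l (conjM g (conjM g₀ z)) then h (proj k l (conjM g (conjM g₀ z))) else 0)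
    (fun t => if IsBUT k l (conjM t z) then h (proj k l (conjM t z)) else 0) ?_
  intro g
  simp only [Equiv.coe_mulRight, conjM_conjM]
  exact if_congr Iff.rfl rfl rfl

lemma hcres_invariant₂ {k l : ℕ} (hk : k ≠ 0) (hl : l ≠ 0) (f : gl F (k + l) → ℂ)
    (hf : Invariant (k + l) f) : Invariant₂ k l (HCres k l f) := by
  intro g₁ g₂ x y
  rw [HCres_apply hk hl, HCres_apply hk hl]
  congr 1
  calc ∑ u : Matrix (Fin k) (Fin l) F, f (but k l (conjM g₁ x) u (conjM g₂ y))
      = ∑ u : Matrix (Fin k) (Fin l) F,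
          f (but k l (conjM g₁ x) (rectConj g₁ g₂ u) (conjM g₂ y)) :=
        (Equiv.sum_comp (rectConj g₁ g₂)
          (fun u => f (but k l (conjM g₁ x) u (conjM g₂ y)))).symm
    _ = ∑ u : Matrix (Fin k) (Fin l) F, f (but k l x u y) := by
        refine Finset.sum_congr rfl fun u _ => ?_
        rw [show but k l (conjM g₁ x) (rectConj g₁ g₂ u) (conjM g₂ y) =
          conjM (dgl g₁ g₂) (but k l x u y) from (conjM_dgl_but g₁ g₂ x u y).symm]
        exact hf _ _

lemma invariant₂_fst {k l : ℕ} {h : gl F k × gl F l → ℂ} (H : Invariant₂ k l h)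
    (y : gl F l) : Invariant k (fun x => h (x, y)) := by
  intro g x
  have := H g 1 x y
  rwa [conjM_one] at this

lemma isIndPreCusp_invariant {n : ℕ} {g : gl F n → ℂ} (h : IsIndPreCusp n g) :
    Invariant n g := by
  induction h with
  | unit => intro g x; rfl
  | cusp n hn f hf hc => exact hf
  | step k m hk hm f hf hc g hg ih => exact hcind_invariant (by omega) (by omega) _

end Invariance
section Pairing

variable {F : Type} [Field F] [Fintype F] [DecidableEq F]

/-- The (unnormalized) hermitian pairing. -/
noncomputable def pair {ι : Type*} [Fintype ι] (u v : ι → ℂ) : ℂ :=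
  ∑ x, u x * (starRingEnd ℂ) (v x)

lemma pair_self_eq_zero {ι : Type*} [Fintype ι] {v : ι → ℂ} (h : pair v v = 0) :
    v = 0 := by
  funext x
  have h2 : ∑ y : ι, Complex.normSq (v y) = 0 := by
    have : ((∑ y : ι, Complex.normSq (v y) : ℝ) : ℂ) = 0 := by
      push_cast
      rw [← h, pair]
      refine Finset.sum_congr rfl fun y _ => ?_
      rw [Complex.mul_conj]
    exact_mod_cast this
  have h3 : ∀ y ∈ Finset.univ, Complex.normSq (v y) = 0 := by
    rw [← Finset.sum_eq_zero_iff_of_nonneg (fun y _ => Complex.normSq_nonneg (v y))]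
    exact h2
  have := h3 x (Finset.mem_univ x)
  simpa using Complex.normSq_eq_zero.mp this

lemma pair_zero_right {ι : Type*} [Fintype ι] (u : ι → ℂ) : pair u 0 = 0 := by
  simp [pair]

lemma Pcard_ne_zero (k l : ℕ) : (Pcard F k l : ℂ) ≠ 0 := by
  have h1 : IsBUT k l (((1 : GL (Fin (k + l)) F) : Matrix (Fin (k + l)) (Fin (k + l)) F)) := by
    rw [Units.val_one, IsBUT]
    have : blk k l (1 : gl F (k + l)) = 1 := by
      simp [blk, Matrix.reindex_apply]
    rw [this, ← Matrix.fromBlocks_one, Matrix.toBlocks_fromBlocks₂₁]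
  have : Nonempty {g : Matrix.GeneralLinearGroup (Fin (k + l)) F //
      IsBUT k l (g : Matrix (Fin (k + l)) (Fin (k + l)) F)} := ⟨⟨1, h1⟩⟩
  have hpos : 0 < Pcard F k l := Nat.card_pos
  exact_mod_cast hpos.ne'

lemma GLcard_ne_zero (n : ℕ) :
    ((Fintype.card (Matrix.GeneralLinearGroup (Fin n) F) : ℂ)) ≠ 0 := by
  have : 0 < Fintype.card (Matrix.GeneralLinearGroup (Fin n) F) := Fintype.card_pos
  exact_mod_cast this.ne'

lemma adjoint {k l : ℕ} (hk : k ≠ 0) (hl : l ≠ 0) (h : gl F k × gl F l → ℂ)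
    (φ : gl F (k + l) → ℂ) (hφ : Invariant (k + l) φ) :
    pair (HCind k l h) φ =
      ((Fintype.card (Matrix.GeneralLinearGroup (Fin (k + l)) F) : ℂ) *
        (Fintype.card F : ℂ) ^ (k * l) * (Pcard F k l : ℂ)⁻¹) *
      pair h (HCres k l φ) := by
  classical
  set N := (Fintype.card (Matrix.GeneralLinearGroup (Fin (k + l)) F) : ℂ) with hN
  set P := (Pcard F k l : ℂ) with hP
  set q := (Fintype.card F : ℂ) with hq
  set S := ∑ x : gl F k, ∑ y : gl F l, ∑ u : Matrix (Fin k) (Fin l) F,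
    h (x, y) * (starRingEnd ℂ) (φ (but k l x u y)) with hS
  have lhs_eq : pair (HCind k l h) φ = P⁻¹ * (N * S) := by
    rw [pair]
    simp only [HCind_apply hk hl]
    have step1 : ∀ z : gl F (k + l),
        ((Pcard F k l : ℂ))⁻¹ * (∑ g : Matrix.GeneralLinearGroup (Fin (k + l)) F,
          if IsBUT k l (conjM g z) then h (proj k l (conjM g z)) else 0) *
            (starRingEnd ℂ) (φ z) =
        P⁻¹ * ∑ g : Matrix.GeneralLinearGroup (Fin (k + l)) F,
          (if IsBUT k l (conjM g z) then h (proj k l (conjM g z)) else 0) *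
            (starRingEnd ℂ) (φ z) := by
      intro z
      rw [mul_assoc, Finset.sum_mul]
    simp only [step1]
    rw [← Finset.mul_sum, Finset.sum_comm]
    congr 1
    have per_g : ∀ g : Matrix.GeneralLinearGroup (Fin (k + l)) F,
        (∑ z : gl F (k + l),
          (if IsBUT k l (conjM g z) then h (proj k l (conjM g z)) else 0) *
            (starRingEnd ℂ) (φ z)) = S := by
      intro g
      have e1 : (∑ z : gl F (k + l),
          (if IsBUT k l (conjM g z) then h (proj k l (conjM g z)) else 0) *
            (starRingEnd ℂ) (φ z)) =
          ∑ w : gl F (k + l),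
            (if IsBUT k l w then h (proj k l w) else 0) * (starRingEnd ℂ) (φ w) := by
        refine Fintype.sum_equiv (conjEquiv g) _ _ ?_
        intro z
        show (if IsBUT k l (conjM g z) then h (proj k l (conjM g z)) else 0) *
            (starRingEnd ℂ) (φ z) =
          (if IsBUT k l (conjM g z) then h (proj k l (conjM g z)) else 0) *
            (starRingEnd ℂ) (φ (conjM g z))
        rw [hφ g z]
      rw [e1]
      have e2 : (∑ w : gl F (k + l),
          (if IsBUT k l w then h (proj k l w) else 0) * (starRingEnd ℂ) (φ w)) =
          ∑ t : gl F k × Matrix (Fin k) (Fin l) F × Matrix (Fin l) (Fin k) F × gl F l,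
            (if IsBUT k l ((blockEquiv k l).symm t)
              then h (proj k l ((blockEquiv k l).symm t)) else 0) *
              (starRingEnd ℂ) (φ ((blockEquiv k l).symm t)) :=
        (Equiv.sum_comp (blockEquiv k l).symm _).symm
      rw [e2, hS]
      rw [Fintype.sum_prod_type]
      refine Finset.sum_congr rfl fun x _ => ?_
      have e3 : ∀ (u : Matrix (Fin k) (Fin l) F) (y : gl F l),
          (∑ v : Matrix (Fin l) (Fin k) F,
            (if IsBUT k l ((blockEquiv k l).symm (x, u, v, y))
              then h (proj k l ((blockEquiv k l).symm (x, u, v, y))) else 0) *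
              (starRingEnd ℂ) (φ ((blockEquiv k l).symm (x, u, v, y)))) =
          h (x, y) * (starRingEnd ℂ) (φ (but k l x u y)) := by
        intro u y
        have e4 : ∀ v : Matrix (Fin l) (Fin k) F,
            (if IsBUT k l ((blockEquiv k l).symm (x, u, v, y))
              then h (proj k l ((blockEquiv k l).symm (x, u, v, y))) else 0) *
              (starRingEnd ℂ) (φ ((blockEquiv k l).symm (x, u, v, y))) =
            (if v = 0 then h (x, y) *
              (starRingEnd ℂ) (φ ((blockEquiv k l).symm (x, u, v, y))) else 0) := by
          intro v
          by_cases hv : v = 0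
          · rw [if_pos hv, if_pos, proj_blockEquiv_symm]
            exact (isBUT_blockEquiv_symm (x, u, v, y)).mpr hv
          · rw [if_neg hv, if_neg, zero_mul]
            rw [isBUT_blockEquiv_symm]
            exact hv
        simp only [e4]
        rw [Finset.sum_ite_eq' Finset.univ (0 : Matrix (Fin l) (Fin k) F)]
        rw [if_pos (Finset.mem_univ _), blockEquiv_symm_eq_but]
      calc (∑ t2 : Matrix (Fin k) (Fin l) F × Matrix (Fin l) (Fin k) F × gl F l,
            (if IsBUT k l ((blockEquiv k l).symm (x, t2))
              then h (proj k l ((blockEquiv k l).symm (x, t2))) else 0) *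
              (starRingEnd ℂ) (φ ((blockEquiv k l).symm (x, t2))))
          = ∑ u : Matrix (Fin k) (Fin l) F, ∑ p : Matrix (Fin l) (Fin k) F × gl F l,
            (if IsBUT k l ((blockEquiv k l).symm (x, u, p))
              then h (proj k l ((blockEquiv k l).symm (x, u, p))) else 0) *
              (starRingEnd ℂ) (φ ((blockEquiv k l).symm (x, u, p))) :=
            Fintype.sum_prod_type _
        _ = ∑ u : Matrix (Fin k) (Fin l) F, ∑ v : Matrix (Fin l) (Fin k) F, ∑ y : gl F l,
            (if IsBUT k l ((blockEquiv k l).symm (x, u, v, y))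
              then h (proj k l ((blockEquiv k l).symm (x, u, v, y))) else 0) *
              (starRingEnd ℂ) (φ ((blockEquiv k l).symm (x, u, v, y))) := by
            refine Finset.sum_congr rfl fun u _ => ?_
            exact Fintype.sum_prod_type _
        _ = ∑ u : Matrix (Fin k) (Fin l) F, ∑ y : gl F l, ∑ v : Matrix (Fin l) (Fin k) F,
            (if IsBUT k l ((blockEquiv k l).symm (x, u, v, y))
              then h (proj k l ((blockEquiv k l).symm (x, u, v, y))) else 0) *
              (starRingEnd ℂ) (φ ((blockEquiv k l).symm (x, u, v, y))) := by
            refine Finset.sum_congr rfl fun u _ => ?_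
            exact Finset.sum_comm
        _ = ∑ u : Matrix (Fin k) (Fin l) F, ∑ y : gl F l,
            h (x, y) * (starRingEnd ℂ) (φ (but k l x u y)) := by
            refine Finset.sum_congr rfl fun u _ => Finset.sum_congr rfl fun y _ => e3 u y
        _ = ∑ y : gl F l, ∑ u : Matrix (Fin k) (Fin l) F,
            h (x, y) * (starRingEnd ℂ) (φ (but k l x u y)) := Finset.sum_comm
    simp only [per_g]
    rw [Finset.sum_const, Finset.card_univ, nsmul_eq_mul, hN]
  have rhs_eq : pair h (HCres k l φ) = (q ^ (k * l))⁻¹ * S := by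
    rw [pair]
    have expand : ∀ p : gl F k × gl F l,
        h p * (starRingEnd ℂ) (HCres k l φ p) =
        (q ^ (k * l))⁻¹ * ∑ u : Matrix (Fin k) (Fin l) F,
          h p * (starRingEnd ℂ) (φ (but k l p.1 u p.2)) := by
      intro p
      rw [HCres_apply hk hl, _root_.map_mul, map_inv₀, map_pow, map_natCast, map_sum]
      rw [← hq, ← Finset.mul_sum]
      ring
    simp only [expand]
    rw [← Finset.mul_sum, hS]
    congr 1
    rw [Fintype.sum_prod_type]
  rw [lhs_eq, rhs_eq]
  have hqne : q ^ (k * l) ≠ 0 := by rw [hq]; exact qpow_ne_zero (k * l)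
  have hq0 : q ≠ 0 := by
    rw [hq]
    exact_mod_cast Fintype.card_ne_zero
  have hPne : P ≠ 0 := Pcard_ne_zero k l
  field_simp

end Pairing
section Averaging

variable {F : Type} [Field F] [Fintype F] [DecidableEq F]

/-- Averaged delta function at the orbit of `x0`. -/
noncomputable def avgDelta (n : ℕ) (x0 : gl F n) : gl F n → ℂ := fun x =>
  ((Fintype.card (Matrix.GeneralLinearGroup (Fin n) F) : ℂ))⁻¹ *
    ∑ g : Matrix.GeneralLinearGroup (Fin n) F, if conjM g x = x0 then 1 else 0

lemma avgDelta_invariant (n : ℕ) (x0 : gl F n) : Invariant n (avgDelta n x0) := by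
  intro g₀ x
  unfold avgDelta
  congr 1
  refine Fintype.sum_equiv (Equiv.mulRight g₀)
    (fun g => if conjM g (conjM g₀ x) = x0 then (1:ℂ) else 0)
    (fun t => if conjM t x = x0 then (1:ℂ) else 0) ?_
  intro g
  simp only [Equiv.coe_mulRight, conjM_conjM]
  exact if_congr Iff.rfl rfl rfl

lemma avg_expansion₁ {n : ℕ} {ψ : gl F n → ℂ} (hψ : Invariant n ψ) (x : gl F n) :
    ψ x = ∑ x0 : gl F n, ψ x0 * avgDelta n x0 x := by
  unfold avgDelta
  set c := ((Fintype.card (Matrix.GeneralLinearGroup (Fin n) F) : ℂ))⁻¹ with hc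
  symm
  calc ∑ x0 : gl F n, ψ x0 *
        (c * ∑ g : Matrix.GeneralLinearGroup (Fin n) F, if conjM g x = x0 then (1:ℂ) else 0)
      = ∑ x0 : gl F n, ∑ g : Matrix.GeneralLinearGroup (Fin n) F,
          (if conjM g x = x0 then c * ψ x0 else 0) := by
        refine Finset.sum_congr rfl fun x0 _ => ?_
        rw [Finset.mul_sum, Finset.mul_sum]
        refine Finset.sum_congr rfl fun g _ => ?_
        by_cases hcase : conjM g x = x0 <;> simp [hcase] <;> ring
    _ = ∑ g : Matrix.GeneralLinearGroup (Fin n) F, ∑ x0 : gl F n,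
          (if conjM g x = x0 then c * ψ x0 else 0) := Finset.sum_comm
    _ = ∑ g : Matrix.GeneralLinearGroup (Fin n) F, c * ψ (conjM g x) := by
        refine Finset.sum_congr rfl fun g _ => ?_
        rw [Finset.sum_ite_eq]
        simp
    _ = ∑ _g : Matrix.GeneralLinearGroup (Fin n) F, c * ψ x := by
        refine Finset.sum_congr rfl fun g _ => ?_
        rw [hψ]
    _ = ψ x := by
        rw [Finset.sum_const, Finset.card_univ, nsmul_eq_mul, ← mul_assoc,
          mul_inv_cancel₀ (GLcard_ne_zero n), one_mul]

lemma invariant₂_snd {k l : ℕ} {h : gl F k × gl F l → ℂ} (H : Invariant₂ k l h)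
    (x : gl F k) : Invariant l (fun y => h (x, y)) := by
  intro g y
  have := H 1 g x y
  rwa [conjM_one] at this

lemma invariant₂_expansion {k l : ℕ} {h : gl F k × gl F l → ℂ} (H : Invariant₂ k l h)
    (p : gl F k × gl F l) :
    h p = ∑ p0 : gl F k × gl F l,
      h p0 * (avgDelta k p0.1 p.1 * avgDelta l p0.2 p.2) := by
  obtain ⟨x, y⟩ := p
  rw [Fintype.sum_prod_type]
  have step1 : h (x, y) = ∑ x0 : gl F k, h (x0, y) * avgDelta k x0 x := by
    have hx : Invariant k (fun x => h (x, y)) := invariant₂_fst H y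
    exact avg_expansion₁ hx x
  rw [step1]
  refine Finset.sum_congr rfl fun x0 _ => ?_
  have step2 : h (x0, y) = ∑ y0 : gl F l, h (x0, y0) * avgDelta l y0 y :=
    avg_expansion₁ (invariant₂_snd H x0) y
  rw [step2, Finset.sum_mul]
  refine Finset.sum_congr rfl fun y0 _ => ?_
  ring

end Averaging
section MainLemma

variable {F : Type} [Field F] [Fintype F] [DecidableEq F]

lemma pair_add_left {ι : Type*} [Fintype ι] (u v w : ι → ℂ) :
    pair (fun x => u x + v x) w = pair u w + pair v w := by
  simp [pair, add_mul, Finset.sum_add_distrib]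

lemma pair_smul_left {ι : Type*} [Fintype ι] (c : ℂ) (u w : ι → ℂ) :
    pair (fun x => c * u x) w = c * pair u w := by
  simp [pair, Finset.mul_sum, mul_assoc]

/-- A function orthogonal to all generators has vanishing Harish-Chandra restrictions. -/
lemma precuspidal_of_perp (n : ℕ) (f₀ : gl F n → ℂ) (hinv : Invariant n f₀)
    (IH : ∀ m < n, ∀ g : gl F m → ℂ, Invariant m g →
      g ∈ Submodule.span ℂ {g' : gl F m → ℂ | IsIndPreCusp m g'})
    (Hperp : ∀ w : gl F n → ℂ, IsIndPreCusp n w → pair w f₀ = 0) :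
    PreCuspidal n f₀ := by
  intro k
  induction k using Nat.strong_induction_on with
  | _ k IHk =>
  intro l hk hl hkl
  subst hkl
  rw [castFun_self]
  have hk' : k ≠ 0 := by omega
  have hl' : l ≠ 0 := by omega
  set h := HCres k l f₀ with hh
  have hinv₂ : Invariant₂ k l h := hcres_invariant₂ hk' hl' f₀ hinv
  -- orthogonality of h against all products of invariant functions
  have key : ∀ a : gl F k → ℂ, Invariant k a → ∀ b : gl F l → ℂ, Invariant l b →
      pair (fun p : gl F k × gl F l => a p.1 * b p.2) h = 0 := by
    intro a ha b hb
    have haspan : a ∈ Submodule.span ℂ {g' : gl F k → ℂ | IsIndPreCusp k g'} :=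
      IH k (by omega) a ha
    clear ha
    induction haspan using Submodule.span_induction with
    | zero =>
      have : (fun p : gl F k × gl F l => (0 : gl F k → ℂ) p.1 * b p.2) = fun _ => 0 := by
        funext p; simp
      rw [this]; simp [pair]
    | add a1 a2 h1 h2 ih1 ih2 =>
      have : (fun p : gl F k × gl F l => (a1 + a2) p.1 * b p.2) =
          fun p : gl F k × gl F l => a1 p.1 * b p.2 + a2 p.1 * b p.2 := by
        funext p; simp [add_mul]
      rw [this, pair_add_left, ih1, ih2, add_zero]
    | smul c a1 h1 ih =>
      have : (fun p : gl F k × gl F l => (c • a1) p.1 * b p.2) =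
          fun p : gl F k × gl F l => c * (a1 p.1 * b p.2) := by
        funext p; simp [smul_eq_mul]; ring
      rw [this, pair_smul_left, ih, mul_zero]
    | mem g hg =>
      have hGL := hg
      clear hg
      cases hGL with
      | unit => omega
      | cusp _ hn1 _ hg'inv hg'cusp =>
        -- reduce over b
        have hbspan : b ∈ Submodule.span ℂ {g' : gl F l → ℂ | IsIndPreCusp l g'} :=
          IH l (by omega) b hb
        clear hb
        induction hbspan using Submodule.span_induction with
        | zero =>
          have : (fun p : gl F k × gl F l => g p.1 * (0 : gl F l → ℂ) p.2) = fun _ => 0 := by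
            funext p; simp
          rw [this]; simp [pair]
        | add b1 b2 h1 h2 ih1 ih2 =>
          have : (fun p : gl F k × gl F l => g p.1 * (b1 + b2) p.2) =
              fun p : gl F k × gl F l => g p.1 * b1 p.2 + g p.1 * b2 p.2 := by
            funext p; simp [mul_add]
          rw [this, pair_add_left, ih1, ih2, add_zero]
        | smul c b1 h1 ih =>
          have : (fun p : gl F k × gl F l => g p.1 * (c • b1) p.2) =
              fun p : gl F k × gl F l => c * (g p.1 * b1 p.2) := by
            funext p; simp [smul_eq_mul]; ring
          rw [this, pair_smul_left, ih, mul_zero]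
        | mem b' hb' =>
          have hgen : IsIndPreCusp (k + l) (HCind k l fun p => g p.1 * b' p.2) :=
            IsIndPreCusp.step k l hk hl g hg'inv hg'cusp b' hb'
          have h0 : pair (HCind k l fun p => g p.1 * b' p.2) f₀ = 0 := Hperp _ hgen
          rw [adjoint hk' hl' _ f₀ hinv] at h0
          rcases mul_eq_zero.mp h0 with hc | hgoal
          · exact absurd hc (mul_ne_zero
              (mul_ne_zero (GLcard_ne_zero (k + l)) (qpow_ne_zero (k * l)))
              (inv_ne_zero (Pcard_ne_zero k l)))
          · exact hgoal
      | step k1 k2 hk1 hk2 c' hc'inv hc'cusp d hd =>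
        -- use the inner induction hypothesis and restriction in stages
        have hres : HCres k1 (k2 + l) (castFun
            (by omega : k1 + k2 + l = k1 + (k2 + l)) f₀) = 0 := by
          have := IHk k1 (by omega) (k2 + l) hk1 (by omega)
            (by omega : k1 + (k2 + l) = k1 + k2 + l)
          exact this
        have hst := stages k1 k2 l (by omega) (by omega) hl' f₀ hres
        have perY : ∀ y : gl F l,
            (∑ x : gl F (k1 + k2), (HCind k1 k2 fun p => c' p.1 * d p.2) x *
              (starRingEnd ℂ) (h (x, y))) = 0 := by
          intro y
          have hstep : pair (HCind k1 k2 fun p => c' p.1 * d p.2) (fun x => h (x, y)) = 0 := by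
            rw [adjoint (by omega) (by omega) _ _ (invariant₂_fst hinv₂ y)]
            have : HCres k1 k2 (fun x => h (x, y)) = 0 := hst y
            rw [this, pair_zero_right, mul_zero]
          exact hstep
        calc pair (fun p : gl F (k1 + k2) × gl F l =>
              (HCind k1 k2 fun p' => c' p'.1 * d p'.2) p.1 * b p.2) h
            = ∑ x : gl F (k1 + k2), ∑ y : gl F l,
                ((HCind k1 k2 fun p' => c' p'.1 * d p'.2) x * b y) *
                  (starRingEnd ℂ) (h (x, y)) := by
              rw [pair]; exact Fintype.sum_prod_type _
          _ = ∑ y : gl F l, ∑ x : gl F (k1 + k2),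
                ((HCind k1 k2 fun p' => c' p'.1 * d p'.2) x * b y) *
                  (starRingEnd ℂ) (h (x, y)) := Finset.sum_comm
          _ = ∑ y : gl F l, b y * ∑ x : gl F (k1 + k2),
                (HCind k1 k2 fun p' => c' p'.1 * d p'.2) x * (starRingEnd ℂ) (h (x, y)) := by
              refine Finset.sum_congr rfl fun y _ => ?_
              rw [Finset.mul_sum]
              refine Finset.sum_congr rfl fun x _ => ?_
              ring
          _ = 0 := by
              refine Finset.sum_eq_zero fun y _ => ?_
              rw [perY y, mul_zero]
  -- conclude h = 0 via the expansion of invariant functions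
  have hpair : pair h h = 0 := by
    rw [pair]
    calc ∑ p : gl F k × gl F l, h p * (starRingEnd ℂ) (h p)
        = ∑ p : gl F k × gl F l, (∑ p0 : gl F k × gl F l,
            h p0 * (avgDelta k p0.1 p.1 * avgDelta l p0.2 p.2)) * (starRingEnd ℂ) (h p) := by
          refine Finset.sum_congr rfl fun p _ => ?_
          rw [← invariant₂_expansion hinv₂ p]
      _ = ∑ p : gl F k × gl F l, ∑ p0 : gl F k × gl F l,
            (h p0 * (avgDelta k p0.1 p.1 * avgDelta l p0.2 p.2)) * (starRingEnd ℂ) (h p) := by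
          refine Finset.sum_congr rfl fun p _ => ?_
          rw [Finset.sum_mul]
      _ = ∑ p0 : gl F k × gl F l, ∑ p : gl F k × gl F l,
            (h p0 * (avgDelta k p0.1 p.1 * avgDelta l p0.2 p.2)) * (starRingEnd ℂ) (h p) :=
          Finset.sum_comm
      _ = ∑ p0 : gl F k × gl F l, h p0 *
            pair (fun p : gl F k × gl F l =>
              avgDelta k p0.1 p.1 * avgDelta l p0.2 p.2) h := by
          refine Finset.sum_congr rfl fun p0 _ => ?_
          rw [pair, Finset.mul_sum]
          refine Finset.sum_congr rfl fun p _ => ?_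
          ring
      _ = 0 := by
          refine Finset.sum_eq_zero fun p0 _ => ?_
          rw [key (avgDelta k p0.1) (avgDelta_invariant k p0.1)
            (avgDelta l p0.2) (avgDelta_invariant l p0.2), mul_zero]
  exact pair_self_eq_zero hpair

end MainLemma
/-- every invariant function is a `ℂ`-linear combination of Harish-Chandra
inductions of pre-cuspidal functions. -/
theorem span_ind_precuspidal (F : Type) [Field F] [Fintype F] [DecidableEq F]
    (n : ℕ) (f : gl F n → ℂ) (hf : Invariant n f) :
    f ∈ Submodule.span ℂ {g : gl F n → ℂ | IsIndPreCusp n g} := by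
  induction n using Nat.strong_induction_on with
  | _ n IH =>
  rcases Nat.eq_zero_or_pos n with hn0 | hn
  · subst hn0
    have hf0 : f = f 0 • (fun _ : gl F 0 => (1 : ℂ)) := by
      funext x
      have hx : x = 0 := by
        ext i j
        exact i.elim0
      rw [hx]
      simp
    rw [hf0]
    exact Submodule.smul_mem _ _ (Submodule.subset_span (IsIndPreCusp.unit))
  · -- orthogonal projection setup
    classical
    set W := Submodule.span ℂ {g : gl F n → ℂ | IsIndPreCusp n g} with hW
    let e : (gl F n → ℂ) ≃ₗ[ℂ] EuclideanSpace ℂ (gl F n) :=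
      (WithLp.linearEquiv 2 ℂ (gl F n → ℂ)).symm
    set K : Submodule ℂ (EuclideanSpace ℂ (gl F n)) := W.map (e : _ →ₗ[ℂ] _) with hK
    set u : EuclideanSpace ℂ (gl F n) := (K.orthogonalProjection (e f) : EuclideanSpace ℂ (gl F n)) with hu
    set w₁ : gl F n → ℂ := e.symm u with hw₁
    have hw₁W : w₁ ∈ W := by
      have huK : u ∈ K := (K.orthogonalProjection (e f)).2
      obtain ⟨w, hwW, hwe⟩ := huK
      have : w₁ = w := by
        rw [hw₁, ← hwe]
        exact e.symm_apply_apply w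
      rw [this]; exact hwW
    set f₀ : gl F n → ℂ := f - w₁ with hf₀
    have hef₀ : e f₀ ∈ Kᗮ := by
      have : e f₀ = e f - u := by
        rw [hf₀, map_sub, hw₁, e.apply_symm_apply]
      rw [this]
      exact K.sub_starProjection_mem_orthogonal (e f)
    have Hperp : ∀ w ∈ W, pair w f₀ = 0 := by
      intro w hw
      have h1 : inner ℂ (e w) (e f₀) = (0 : ℂ) :=
        (Submodule.mem_orthogonal K (e f₀)).mp hef₀ (e w) (Submodule.mem_map_of_mem hw)
      have h2 : pair w f₀ = (starRingEnd ℂ) (inner ℂ (e w) (e f₀) : ℂ) := by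
        rw [pair, PiLp.inner_apply, map_sum]
        refine Finset.sum_congr rfl fun x _ => ?_
        rw [RCLike.inner_apply', _root_.map_mul, Complex.conj_conj]
        rfl
      rw [h2, h1, map_zero]
    have hWinv : ∀ w ∈ W, Invariant n w := by
      intro w hw
      have hle : W ≤ InvSub F n :=
        Submodule.span_le.mpr (fun g hg => isIndPreCusp_invariant hg)
      exact hle hw
    have hf₀inv : Invariant n f₀ := by
      intro g x
      rw [hf₀]
      simp only [Pi.sub_apply]
      rw [hf g x, hWinv w₁ hw₁W g x]
    -- f₀ is pre-cuspidal
    have hcusp : PreCuspidal n f₀ :=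
      precuspidal_of_perp n f₀ hf₀inv (fun m hm g hg => IH m hm g hg)
        (fun w hw => Hperp w (Submodule.subset_span hw))
    have hmem : IsIndPreCusp n f₀ := IsIndPreCusp.cusp n hn f₀ hf₀inv hcusp
    have hzero : f₀ = 0 := pair_self_eq_zero (Hperp f₀ (Submodule.subset_span hmem))
    have : f = w₁ := by
      have := hzero
      rw [hf₀, sub_eq_zero] at this
      exact this
    rw [this]
    exact hw₁W
end HCPaper
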